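/- Let n ≥ 1 be an integer, b ≥ 0 a real number, and λ > 0 a real number. Set μ' := λ(2b + n) + λ². Then the 3×3 real matrix M := μ'·I + A, where A has rows (λ, 0, −λ^{3/2}), (0, −λ, λ^{3/2}), (−λ^{−1/2}(b+n), λ^{−1/2}·b, n), has characteristic polynomial (X − μ')·(X − (μ' + n/2 + s))·(X − (μ' + n/2 − s)) where s := √(n²/4 + λ(2b+n) + λ²); in particular its eigenvalues are μ' and μ' + n/2 ± √(n²/4 + λ(2b+n) + λ²). -/

import Mathlib

open Polynomial

/-- The matrix of the Laplacian on 1-forms on an H-type group, restricted to the invariant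
subspace spanned by `v₁, v₂, v₃`, has characteristic polynomial
`(X − μ')(X − (μ' + n/2 + s))(X − (μ' + n/2 − s))` with `s = √(n²/4 + λ(2b+n) + λ²)`;
in particular its eigenvalues are `μ'` and `μ' + n/2 ± s`. -/
theorem htype_laplacian_one_forms_charpoly (n : ℕ) (hn : 1 ≤ n) (b lam : ℝ)
    (hb : 0 ≤ b) (hlam : 0 < lam)
    (μ' : ℝ) (hμ : μ' = lam * (2 * b + n) + lam ^ 2)
    (s : ℝ) (hs : s = Real.sqrt ((n : ℝ) ^ 2 / 4 + lam * (2 * b + n) + lam ^ 2))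
    (M : Matrix (Fin 3) (Fin 3) ℝ)
    (hM : M = μ' • (1 : Matrix (Fin 3) (Fin 3) ℝ) +
      !![lam, 0, -(lam * Real.sqrt lam);
         0, -lam, lam * Real.sqrt lam;
         -((Real.sqrt lam)⁻¹ * (b + n)), (Real.sqrt lam)⁻¹ * b, (n : ℝ)]) :
    M.charpoly =
      (X - C μ') * (X - C (μ' + n / 2 + s)) * (X - C (μ' + n / 2 - s)) := by
  have hsl2 : Real.sqrt lam ^ 2 = lam := Real.sq_sqrt hlam.le
  have hsl0 : Real.sqrt lam ≠ 0 := by positivity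
  have hinv : (Real.sqrt lam)⁻¹ = Real.sqrt lam / lam := by
    rw [eq_div_iff hlam.ne']
    field_simp
    exact hsl2.symm
  have hs2 : s ^ 2 = (n : ℝ) ^ 2 / 4 + lam * (2 * b + n) + lam ^ 2 := by
    rw [hs]; exact Real.sq_sqrt (by positivity)
  apply Polynomial.funext
  intro x
  rw [Matrix.charpoly, Matrix.det_fin_three, hM]
  simp [Matrix.charmatrix_apply, Matrix.one_apply, hinv, Matrix.diagonal]
  ring_nf
  simp only [hsl2, hs2, hμ]
  field_simp
  ring
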